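/- Let C be a real symmetric nonnegative V×V matrix with zero diagonal whose off-diagonal entries satisfy the Gomory-Hu triangle inequality, and let M = max_{v,w} c_{vw}. Then every eigenvalue of C is at least −M, and −M is an eigenvalue of C (so the smallest eigenvalue of C equals −M), provided |V| ≥ 2. -/

import Mathlib

open MeasureTheory Finset Set

lemma sq_sum_lemma {V α : Type*} [Fintype V] [Fintype α] [DecidableEq α]
    (f : V → α) (v : V → ℝ) :
    0 ≤ ∑ x, ∑ y, v x * v y * (if f x = f y then 1 else 0) := by
  set W : α → ℝ := fun a => ∑ y ∈ univ.filter (fun y => f y = a), v y with hW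
  have h1 : ∀ x, (∑ y, v x * v y * (if f x = f y then 1 else 0)) = v x * W (f x) := by
    intro x
    rw [hW, Finset.mul_sum, Finset.sum_filter]
    apply Finset.sum_congr rfl
    intro y _
    by_cases h : f y = f x
    · simp [h]
    · have h' : ¬ (f x = f y) := fun hh => h hh.symm
      simp [h, h']
  calc (0:ℝ) ≤ ∑ a, W a * W a := Finset.sum_nonneg (fun a _ => mul_self_nonneg _)
    _ = ∑ x, v x * W (f x) := by
        rw [← Finset.sum_fiberwise_of_maps_to (g := f) (t := univ) (fun x _ => mem_univ _)
          (fun x => v x * W (f x))]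
        apply Finset.sum_congr rfl
        intro a _
        rw [Finset.sum_congr rfl (fun x hx => by
          rw [(Finset.mem_filter.mp hx).2]), ← Finset.sum_mul]
    _ = ∑ x, ∑ y, v x * v y * (if f x = f y then 1 else 0) :=
        (Finset.sum_congr rfl (fun x _ => (h1 x).symm))

lemma layer_nonneg {V : Type*} [Fintype V] [DecidableEq V]
    (C : Matrix V V ℝ) (hsymm : C.IsSymm)
    (hGH : ∀ x y z : V, x ≠ y → y ≠ z → x ≠ z → min (C x y) (C y z) ≤ C x z)
    (v : V → ℝ) (t : ℝ) :
    0 ≤ ∑ x, ∑ y, v x * v y * (if x = y ∨ t < C x y then 1 else 0) := by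
  have hsym : ∀ x y : V, (x = y ∨ t < C x y) → (y = x ∨ t < C y x) := by
    intro x y h
    rcases h with h | h
    · exact Or.inl h.symm
    · right; rwa [hsymm.apply x y]
  have htrans : ∀ x y z : V, (x = y ∨ t < C x y) → (y = z ∨ t < C y z) →
      (x = z ∨ t < C x z) := by
    intro x y z hxy hyz
    by_cases hxz : x = z
    · exact Or.inl hxz
    right
    by_cases h1 : x = y
    · subst h1
      rcases hyz with h | h
      · exact absurd h hxz
      · exact h
    by_cases h2 : y = z
    · subst h2
      rcases hxy with h | h
      · exact absurd h hxz
      · exact h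
    rcases hxy with h | hxy
    · exact absurd h h1
    rcases hyz with h | hyz
    · exact absurd h h2
    exact lt_of_lt_of_le (lt_min hxy hyz) (hGH x y z h1 h2 hxz)
  -- class function
  set f : V → Finset V := fun x => univ.filter (fun y => x = y ∨ t < C x y) with hf
  have hfeq : ∀ x y : V, f x = f y ↔ (x = y ∨ t < C x y) := by
    intro x y
    constructor
    · intro h
      have hy : y ∈ f y := by simp [hf]
      rw [← h] at hy
      simpa [hf] using hy
    · intro h
      ext z
      simp only [hf, Finset.mem_filter, Finset.mem_univ, true_and]
      exact ⟨fun hz => htrans y x z (hsym x y h) hz, fun hz => htrans x y z h hz⟩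
  refine le_of_le_of_eq (sq_sum_lemma f v) ?_
  exact Finset.sum_congr rfl fun x _ => Finset.sum_congr rfl fun y _ => congrArg (v x * v y * ·) (if_congr (hfeq x y) rfl rfl)

lemma indicator_integral (c M : ℝ) (hc : 0 ≤ c) (hcM : c ≤ M) (k : ℝ) :
    ∫ t in Ioc (0:ℝ) M, (if t < c then k else 0) = k * c := by
  have h1 : (fun t => if t < c then k else 0) = (Iio c).indicator (fun _ => k) := by
    funext t
    simp [Set.indicator, Set.mem_Iio]
  rw [h1, setIntegral_indicator measurableSet_Iio]
  have h2 : Ioc (0:ℝ) M ∩ Iio c = Ioo 0 c := by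
    ext t
    simp only [Set.mem_inter_iff, Set.mem_Ioc, Set.mem_Iio, Set.mem_Ioo]
    constructor
    · rintro ⟨⟨h1, _⟩, h3⟩; exact ⟨h1, h3⟩
    · rintro ⟨h1, h2'⟩; exact ⟨⟨h1, le_trans (le_of_lt h2') hcM⟩, h2'⟩
  rw [h2, setIntegral_const, measureReal_def, Real.volume_Ioo, smul_eq_mul,
    ENNReal.toReal_ofReal (by linarith), mul_comm, sub_zero]

lemma const_integral (M : ℝ) (hM : 0 ≤ M) (k : ℝ) :
    ∫ _ in Ioc (0:ℝ) M, k = M * k := by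
  rw [setIntegral_const, measureReal_def, Real.volume_Ioc, smul_eq_mul, ENNReal.toReal_ofReal (by linarith), sub_zero]

lemma quad_form_ge {V : Type*} [Fintype V] [DecidableEq V]
    (C : Matrix V V ℝ) (hsymm : C.IsSymm)
    (hnn : ∀ v w : V, 0 ≤ C v w)
    (hGH : ∀ x y z : V, x ≠ y → y ≠ z → x ≠ z → min (C x y) (C y z) ≤ C x z)
    (M : ℝ) (hMnn : 0 ≤ M) (hMub : ∀ x y : V, C x y ≤ M) (v : V → ℝ) :
    0 ≤ ∑ x, ∑ y, v x * v y * (if x = y then M else C x y) := by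
  set g : V × V → ℝ → ℝ :=
    fun p t => v p.1 * v p.2 * (if p.1 = p.2 ∨ t < C p.1 p.2 then 1 else 0) with hg
  have hfin : volume (Ioc (0:ℝ) M) < ⊤ := by
    rw [Real.volume_Ioc]; exact ENNReal.ofReal_lt_top
  have hint : ∀ p : V × V, IntegrableOn (g p) (Ioc (0:ℝ) M) volume := by
    intro ⟨x, y⟩
    by_cases h : x = y
    · have : g (x, y) = fun _ => v x * v y := by
        funext t; simp [hg, h]
      rw [this]
      exact integrableOn_const hfin.ne
    · have : g (x, y) = (Iio (C x y)).indicator (fun _ => v x * v y) := by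
        funext t; simp [hg, h, Set.indicator, Set.mem_Iio]
      rw [this]
      exact (integrableOn_const hfin.ne).indicator measurableSet_Iio
  have hval : ∀ p : V × V,
      (∫ t in Ioc (0:ℝ) M, g p t) = v p.1 * v p.2 * (if p.1 = p.2 then M else C p.1 p.2) := by
    intro ⟨x, y⟩
    by_cases h : x = y
    · have h1 : g (x, y) = fun _ => v x * v y := by funext t; simp [hg, h]
      rw [h1, const_integral M hMnn, if_pos h]
      ring
    · have h1 : g (x, y) = fun t => if t < C x y then v x * v y else 0 := by
        funext t; simp only [hg, h, false_or]
        by_cases ht : t < C x y <;> simp [ht]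
      rw [h1, indicator_integral (C x y) M (hnn x y) (hMub x y), if_neg h]
  have key : (0:ℝ) ≤ ∑ p : V × V, ∫ t in Ioc (0:ℝ) M, g p t := by
    rw [← integral_finset_sum univ (fun p _ => hint p)]
    apply setIntegral_nonneg measurableSet_Ioc
    intro t _
    rw [Fintype.sum_prod_type]
    exact layer_nonneg C hsymm hGH v t
  calc (0:ℝ) ≤ ∑ p : V × V, ∫ t in Ioc (0:ℝ) M, g p t := key
    _ = ∑ p : V × V, v p.1 * v p.2 * (if p.1 = p.2 then M else C p.1 p.2) :=
        Finset.sum_congr rfl (fun p _ => hval p)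
    _ = ∑ x, ∑ y, v x * v y * (if x = y then M else C x y) := Fintype.sum_prod_type _

/-- For a nonnegative symmetric matrix with zero diagonal satisfying the
Gomory-Hu triangle inequality off the diagonal, the smallest eigenvalue is −M,
where M is the maximum entry. -/
theorem stmt_5 {V : Type*} [Fintype V] [DecidableEq V] (hcard : 1 < Fintype.card V)
    (C : Matrix V V ℝ) (hsymm : C.IsSymm)
    (hdiag : ∀ v : V, C v v = 0) (hnn : ∀ v w : V, 0 ≤ C v w)
    (hGH : ∀ x y z : V, x ≠ y → y ≠ z → x ≠ z → min (C x y) (C y z) ≤ C x z)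
    (M : ℝ) (hM : IsGreatest {t | ∃ v w : V, C v w = t} M) :
    (∀ (μ : ℝ) (v : V → ℝ), v ≠ 0 → C.mulVec v = μ • v → -M ≤ μ) ∧
    (∃ v : V → ℝ, v ≠ 0 ∧ C.mulVec v = (-M) • v) := by
  have hMub : ∀ x y : V, C x y ≤ M := fun x y => hM.2 ⟨x, y, rfl⟩
  have hM0 : 0 ≤ M := by
    rcases hM.1 with ⟨a, b, hab⟩
    exact hab ▸ hnn a b
  constructor
  · intro μ v hv hev
    have hq := quad_form_ge C hsymm hnn hGH M hM0 hMub v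
    have hterm : ∀ x y : V, v x * v y * (if x = y then M else C x y)
        = v x * (C x y * v y) + (if x = y then M * (v x * v x) else 0) := by
      intro x y
      by_cases h : x = y
      · subst h; simp [hdiag x]; ring
      · simp [h]; ring
    have hinner : ∀ x, (∑ y, v x * v y * (if x = y then M else C x y))
        = v x * (∑ y, C x y * v y) + M * (v x * v x) := by
      intro x
      have h0 : (∑ y, if x = y then M * (v x * v x) else 0) = M * (v x * v x) := by simp
      calc (∑ y, v x * v y * (if x = y then M else C x y))
          = ∑ y, (v x * (C x y * v y) + if x = y then M * (v x * v x) else 0) :=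
            Finset.sum_congr rfl fun y _ => hterm x y
        _ = (∑ y, v x * (C x y * v y)) + ∑ y, (if x = y then M * (v x * v x) else 0) :=
            Finset.sum_add_distrib
        _ = v x * (∑ y, C x y * v y) + M * (v x * v x) := by rw [h0, ← Finset.mul_sum]
    have hsplit : ∑ x, ∑ y, v x * v y * (if x = y then M else C x y)
        = (∑ x, v x * ∑ y, C x y * v y) + M * ∑ x, v x * v x := by
      rw [Finset.sum_congr rfl fun x _ => hinner x, Finset.sum_add_distrib, ← Finset.mul_sum]
    have hS : 0 < ∑ x, v x * v x := by
      obtain ⟨x, hx⟩ := Function.ne_iff.mp hv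
      apply Finset.sum_pos' (fun y _ => mul_self_nonneg _) ⟨x, Finset.mem_univ x, ?_⟩
      exact mul_self_pos.mpr hx
    have hdot : (∑ x, v x * ∑ y, C x y * v y) = μ * ∑ x, v x * v x := by
      have : ∀ x, (∑ y, C x y * v y) = μ * v x := by
        intro x
        have := congrFun hev x
        simpa [Matrix.mulVec, dotProduct] using this
      simp only [this, Finset.mul_sum]
      exact Finset.sum_congr rfl fun x _ => by ring
    rw [hsplit, hdot] at hq
    nlinarith
  · rcases hM.1 with ⟨a, b, hab⟩
    by_cases hMz : M = 0
    · have hC0 : ∀ x y : V, C x y = 0 := fun x y => le_antisymm (hMz ▸ hMub x y) (hnn x y)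
      have : Nonempty V := Fintype.card_pos_iff.mp (by omega)
      obtain ⟨x⟩ := this
      refine ⟨fun _ => 1, ?_, ?_⟩
      · intro h
        have := congrFun h x
        simp at this
      · funext z
        simp [Matrix.mulVec, dotProduct, hC0, hMz]
    · have hab' : a ≠ b := by
        rintro rfl
        rw [hdiag] at hab
        exact hMz hab.symm
      set v : V → ℝ := Pi.single a 1 - Pi.single b 1 with hv
      have hva : v a = 1 := by simp [hv, Pi.single_apply, hab']
      have hvb : v b = -1 := by simp [hv, Pi.single_apply, hab'.symm]
      refine ⟨v, ?_, ?_⟩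
      · intro h
        have := congrFun h a
        rw [hva] at this
        exact one_ne_zero this
      · have hmv : C.mulVec v = fun z => C z a - C z b := by
          funext z
          simp [hv, Matrix.mulVec_sub, Matrix.mulVec_single]
        funext z
        rw [hmv]
        simp only [Pi.smul_apply, smul_eq_mul]
        by_cases hza : z = a
        · subst hza
          rw [hva, hdiag, hab]
          ring
        by_cases hzb : z = b
        · subst hzb
          rw [hvb, hdiag]
          have : C z a = M := by rw [← hsymm.apply]; exact hab  -- C z a = C a z? check
          rw [this]; ring
        · have hv0 : v z = 0 := by simp [hv, Pi.single_apply, hza, hzb]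
          rw [hv0]
          have h1 : C z a ≤ C z b := by
            have := hGH z a b hza hab' hzb
            rw [hab] at this
            have hle : C z a ≤ M := hMub z a
            rw [min_eq_left hle] at this
            exact this
          have h2 : C z b ≤ C z a := by
            have hba : C b a = M := by rw [← hsymm.apply]; exact hab
            have := hGH z b a hzb (Ne.symm hab') hza
            rw [hba] at this
            have hle : C z b ≤ M := hMub z b
            rw [min_eq_left hle] at this
            exact this
          rw [le_antisymm h1 h2]
          ring
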